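/- Let C be a symmetric positive definite n×n real matrix, D a symmetric n×n real matrix, and define f : ℝ → ℝ by f(t) = tr(exp(t·D)·C) + tr(exp(−t·D)·C⁻¹) − 2n. Then for every integer m ≥ 1 and every t ∈ ℝ, the derivative of even order 2m satisfies f^(2m)(t) ≤ ‖D‖_∞^(2m) · f(t) + 2·tr(D^(2m)), where ‖D‖_∞ is the spectral norm of D. -/

import Mathlib

open Matrix

/-- The spectral norm of a real symmetric matrix: the maximum absolute value
of its eigenvalues. -/
noncomputable def specNormInf {n : ℕ} {D : Matrix (Fin n) (Fin n) ℝ}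
    (hD : D.IsHermitian) : ℝ :=
  ⨆ i, |hD.eigenvalues i|

private lemma exp_comb_iteratedDeriv {n : ℕ} (μ : Fin n → ℝ) :
    ∀ (k : ℕ) (a b : Fin n → ℝ) (c : ℝ),
    iteratedDeriv k
      (fun t : ℝ => (∑ i, (a i * Real.exp (μ i * t) + b i * Real.exp (-(μ i) * t))) + c)
    = fun t : ℝ => (∑ i, ((μ i) ^ k * a i * Real.exp (μ i * t)
        + (-(μ i)) ^ k * b i * Real.exp (-(μ i) * t))) + (if k = 0 then c else 0) := by
  intro k
  induction k with
  | zero => intro a b c; simp [iteratedDeriv_zero]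
  | succ k ih =>
    intro a b c
    have hderiv : deriv (fun t : ℝ =>
        (∑ i, (a i * Real.exp (μ i * t) + b i * Real.exp (-(μ i) * t))) + c)
        = fun t : ℝ => (∑ i, ((μ i * a i) * Real.exp (μ i * t)
            + (-(μ i) * b i) * Real.exp (-(μ i) * t))) + (0 : ℝ) := by
      funext t
      have H : ∀ i : Fin n,
          HasDerivAt (fun t : ℝ => a i * Real.exp (μ i * t) + b i * Real.exp (-(μ i) * t))
          ((μ i * a i) * Real.exp (μ i * t) + (-(μ i) * b i) * Real.exp (-(μ i) * t)) t := by
        intro i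
        have h1 : HasDerivAt (fun t : ℝ => μ i * t) (μ i) t := by
          simpa using (hasDerivAt_id t).const_mul (μ i)
        have h2 : HasDerivAt (fun t : ℝ => -(μ i) * t) (-(μ i)) t := by
          simpa using (hasDerivAt_id t).const_mul (-(μ i))
        have := (h1.exp.const_mul (a i)).add (h2.exp.const_mul (b i))
        refine this.congr_deriv ?_
        ring
      have Hs : HasDerivAt (fun t : ℝ =>
          (∑ i, (a i * Real.exp (μ i * t) + b i * Real.exp (-(μ i) * t))) + c)
          (∑ i, ((μ i * a i) * Real.exp (μ i * t) + (-(μ i) * b i) * Real.exp (-(μ i) * t)))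
          t := by
        simpa using (HasDerivAt.sum (fun i (_ : i ∈ Finset.univ) => H i)).add_const c
      simpa using Hs.deriv
    rw [iteratedDeriv_succ', hderiv]
    refine (ih (fun i => μ i * a i) (fun i => -(μ i) * b i) 0).trans ?_
    funext s
    simp only [Nat.succ_ne_zero, if_false, ite_self, add_zero]
    refine Finset.sum_congr rfl fun i _ => ?_
    ring

private lemma key_ineq {x y l L : ℝ} (hx : 0 < x) (hy : 0 < y) (hxy : 1 ≤ x * y)
    (hlL : l ≤ L) : l * x + l * y ≤ L * (x + y) - 2 * L + 2 * l := by
  have hsum : 2 ≤ x + y := by nlinarith [sq_nonneg (x - y), mul_pos hx hy]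
  nlinarith [mul_nonneg (sub_nonneg.mpr hlL) (sub_nonneg.mpr hsum)]

theorem iteratedDeriv_even_le
    (n : ℕ) (hn : 1 ≤ n) (C D : Matrix (Fin n) (Fin n) ℝ)
    (hC : C.PosDef) (hD : D.IsHermitian)
    (f : ℝ → ℝ)
    (hf : ∀ t : ℝ, f t =
      (NormedSpace.exp (t • D) * C).trace +
        (NormedSpace.exp ((-t) • D) * C⁻¹).trace - 2 * n)
    (m : ℕ) (hm : 1 ≤ m) (t : ℝ) :
    iteratedDeriv (2 * m) f t ≤
      (specNormInf hD) ^ (2 * m) * f t + 2 * (D ^ (2 * m)).trace := by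
  classical
  have hne : Nonempty (Fin n) := ⟨⟨0, hn⟩⟩
  set U : Matrix (Fin n) (Fin n) ℝ := (hD.eigenvectorUnitary : Matrix (Fin n) (Fin n) ℝ)
    with hUdef
  set lam : Fin n → ℝ := hD.eigenvalues with hlam
  have hU2 : U * star U = 1 := (Matrix.mem_unitaryGroup_iff).mp hD.eigenvectorUnitary.2
  have hU1 : star U * U = 1 := (Matrix.mem_unitaryGroup_iff').mp hD.eigenvectorUnitary.2
  have hUinv : U⁻¹ = star U := Matrix.inv_eq_left_inv hU1
  have hUunit : IsUnit U := ⟨⟨U, star U, hU2, hU1⟩, rfl⟩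
  have hspec : D = U * diagonal lam * star U := by
    have h := hD.spectral_theorem
    simpa [RCLike.ofReal_real_eq_id, Function.comp] using h
  set a : Fin n → ℝ := fun i => (star U * C * U) i i with ha
  set b : Fin n → ℝ := fun i => (star U * C⁻¹ * U) i i with hb
  -- trace identities
  have tdm : ∀ (v : Fin n → ℝ) (N : Matrix (Fin n) (Fin n) ℝ),
      (diagonal v * N).trace = ∑ i, v i * N i i := by
    intro v N
    simp [Matrix.trace, Matrix.diag, Matrix.mul_apply, Matrix.diagonal_apply]
  have tconj : ∀ (v : Fin n → ℝ) (N : Matrix (Fin n) (Fin n) ℝ),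
      (U * diagonal v * star U * N).trace = ∑ i, v i * (star U * N * U) i i := by
    intro v N
    rw [Matrix.mul_assoc (U * diagonal v) (star U) N, Matrix.trace_mul_comm,
      ← Matrix.mul_assoc, Matrix.trace_mul_comm, tdm]
  -- matrix exponential along the geodesic
  have hexp : ∀ s : ℝ, NormedSpace.exp (s • D)
      = U * diagonal (fun i => Real.exp (s * lam i)) * star U := by
    intro s
    have h1 : s • D = U * (s • diagonal lam) * U⁻¹ := by
      rw [hspec, hUinv, mul_smul_comm, smul_mul_assoc]
    have h2 : (s • diagonal lam : Matrix (Fin n) (Fin n) ℝ)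
        = diagonal (fun i => s * lam i) := by
      rw [← Matrix.diagonal_smul]
      rfl
    have h3 : (NormedSpace.exp (fun i => s * lam i) : Fin n → ℝ)
        = fun i => Real.exp (s * lam i) := by
      funext i
      rw [Pi.exp_def]
      exact (congrFun Real.exp_eq_exp_ℝ _).symm
    rw [h1, Matrix.exp_conj U _ hUunit, h2, Matrix.exp_diagonal, h3, hUinv]
  -- explicit form of f
  have hf' : f = fun s : ℝ =>
      (∑ i, (a i * Real.exp (lam i * s) + b i * Real.exp (-(lam i) * s))) + (-(2 * n)) := by
    funext s
    rw [hf s, hexp s, hexp (-s), tconj, tconj, ← Finset.sum_add_distrib]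
    rw [Finset.sum_congr rfl (fun i (_ : i ∈ Finset.univ) => by
      rw [mul_comm s (lam i), show -s * lam i = -(lam i) * s by ring]
      ring : ∀ i ∈ Finset.univ,
        Real.exp (s * lam i) * a i + Real.exp (-s * lam i) * b i
        = a i * Real.exp (lam i * s) + b i * Real.exp (-(lam i) * s))]
    ring
  -- value of the iterated derivative
  have hval : iteratedDeriv (2 * m) f t
      = ∑ i, (lam i ^ (2 * m) * a i * Real.exp (lam i * t)
          + lam i ^ (2 * m) * b i * Real.exp (-(lam i) * t)) := by
    rw [hf', exp_comb_iteratedDeriv lam (2 * m) a b (-(2 * n))]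
    have h2m : ¬(2 * m = 0) := by omega
    simp only [h2m, if_false, add_zero]
    refine Finset.sum_congr rfl fun i _ => ?_
    rw [(even_two_mul m).neg_pow (lam i)]
  -- columns of U are unit vectors
  have hcol : ∀ i : Fin n, (fun k => U k i) ⬝ᵥ (fun k => U k i) = 1 := by
    intro i
    have h := congrFun (congrFun hU1 i) i
    simpa [Matrix.mul_apply, Matrix.one_apply, dotProduct, Matrix.star_apply] using h
  have hvne : ∀ i : Fin n, (fun k => U k i) ≠ 0 := by
    intro i h
    have h1 := hcol i
    rw [h] at h1
    simp [dotProduct] at h1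
  have hquad : ∀ (M : Matrix (Fin n) (Fin n) ℝ) (i : Fin n),
      (star U * M * U) i i = (fun k => U k i) ⬝ᵥ (M *ᵥ fun k => U k i) := by
    intro M i
    simp only [Matrix.mul_apply, Matrix.mulVec, dotProduct, Matrix.star_apply, star_trivial,
      Finset.sum_mul, Finset.mul_sum]
    rw [Finset.sum_comm]
    exact Finset.sum_congr rfl fun j _ => Finset.sum_congr rfl fun k _ => by ring
  have hapos : ∀ i, 0 < a i := by
    intro i
    have h := hC.dotProduct_mulVec_pos (hvne i)
    rw [ha]
    simpa [hquad C i] using h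
  have hbpos : ∀ i, 0 < b i := by
    intro i
    have h := hC.inv.dotProduct_mulVec_pos (hvne i)
    rw [hb]
    simpa [hquad C⁻¹ i] using h
  -- Cauchy-Schwarz: a i * b i ≥ 1
  have hCdet : IsUnit C.det := (Matrix.isUnit_iff_isUnit_det C).mp hC.isUnit
  have hCinv : C * C⁻¹ = 1 := Matrix.mul_nonsing_inv C hCdet
  have hCsymm : Cᵀ = C := by
    have h := hC.1
    ext i j
    have := congrFun (congrFun h i) j
    simpa [Matrix.conjTranspose_apply] using this
  have hab : ∀ i, 1 ≤ a i * b i := by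
    intro i
    set v : Fin n → ℝ := fun k => U k i with hv
    set y : Fin n → ℝ := C⁻¹ *ᵥ v with hy
    have hCy : C *ᵥ y = v := by
      rw [hy, Matrix.mulVec_mulVec, hCinv, Matrix.one_mulVec]
    have hyCv : y ⬝ᵥ (C *ᵥ v) = 1 := by
      rw [Matrix.dotProduct_mulVec, ← Matrix.mulVec_transpose, hCsymm, hCy,
        dotProduct_comm, hcol i]
    have hyv : y ⬝ᵥ v = b i := by
      rw [dotProduct_comm, hb]
      exact (hquad C⁻¹ i).symm ▸ rfl
    have hav : v ⬝ᵥ (C *ᵥ v) = a i := (hquad C i).symm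
    have hq : ∀ s : ℝ, 0 ≤ b i * (s * s) + 2 * s + a i := by
      intro s
      have hps := hC.posSemidef.dotProduct_mulVec_nonneg (v + s • y)
      have hexp : (star (v + s • y)) ⬝ᵥ (C *ᵥ (v + s • y))
          = b i * (s * s) + 2 * s + a i := by
        simp only [star_trivial, Matrix.mulVec_add, Matrix.mulVec_smul, hCy,
          dotProduct_add, add_dotProduct, smul_dotProduct, dotProduct_smul,
          smul_eq_mul]
        rw [hyCv, hyv, hav, hcol i]
        ring
      rw [hexp] at hps
      exact hps
    have hd := discrim_le_zero hq
    rw [discrim] at hd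
    nlinarith [hd]
  -- eigenvalue bound
  have hL : ∀ i, lam i ^ (2 * m) ≤ (specNormInf hD) ^ (2 * m) := by
    intro i
    have h1 : |lam i| ≤ specNormInf hD := by
      have h2 := le_ciSup (f := fun j => |hD.eigenvalues j|)
        (Set.Finite.bddAbove (Set.finite_range _)) i
      simpa [specNormInf] using h2
    calc lam i ^ (2 * m) = |lam i| ^ (2 * m) := by
          rw [pow_mul, pow_mul, sq_abs]
      _ ≤ _ := pow_le_pow_left₀ (abs_nonneg _) h1 _
  -- trace of D^(2m)
  have key : ∀ X Y : Matrix (Fin n) (Fin n) ℝ,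
      (U * X * star U) * (U * Y * star U) = U * (X * Y) * star U := by
    intro X Y
    have h : (U * X * star U) * (U * Y * star U)
        = U * X * ((star U * U) * (Y * star U)) := by
      simp only [Matrix.mul_assoc]
    rw [h, hU1, Matrix.one_mul, ← Matrix.mul_assoc, ← Matrix.mul_assoc]
  have hDpow : ∀ k : ℕ, D ^ k = U * diagonal (fun i => lam i ^ k) * star U := by
    intro k
    induction k with
    | zero =>
      simp only [pow_zero]
      rw [show (diagonal (fun _ : Fin n => (1 : ℝ))) = (1 : Matrix (Fin n) (Fin n) ℝ) from
        Matrix.diagonal_one, Matrix.mul_one, hU2]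
    | succ k ih =>
      have hfun : (fun i => lam i ^ k * lam i) = fun i => lam i ^ (k + 1) := by
        funext i; rw [pow_succ]
      rw [pow_succ, ih, hspec, key, Matrix.diagonal_mul_diagonal, hfun]
  have htr : (D ^ (2 * m)).trace = ∑ i, lam i ^ (2 * m) := by
    rw [hDpow (2 * m), Matrix.trace_mul_cycle, hU1, Matrix.one_mul, Matrix.trace_diagonal]
  -- final assembly
  have hsumineq : ∑ i, (lam i ^ (2 * m) * a i * Real.exp (lam i * t)
          + lam i ^ (2 * m) * b i * Real.exp (-(lam i) * t))
      ≤ ∑ i, ((specNormInf hD) ^ (2 * m)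
            * (a i * Real.exp (lam i * t) + b i * Real.exp (-(lam i) * t))
          - 2 * (specNormInf hD) ^ (2 * m) + 2 * lam i ^ (2 * m)) := by
    refine Finset.sum_le_sum fun i _ => ?_
    have hx : 0 < a i * Real.exp (lam i * t) := mul_pos (hapos i) (Real.exp_pos _)
    have hy : 0 < b i * Real.exp (-(lam i) * t) := mul_pos (hbpos i) (Real.exp_pos _)
    have hxy : 1 ≤ (a i * Real.exp (lam i * t)) * (b i * Real.exp (-(lam i) * t)) := by
      have hE : Real.exp (lam i * t) * Real.exp (-(lam i) * t) = 1 := by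
        rw [← Real.exp_add, show lam i * t + -(lam i) * t = 0 by ring, Real.exp_zero]
      calc (1 : ℝ) ≤ a i * b i := hab i
        _ = (a i * Real.exp (lam i * t)) * (b i * Real.exp (-(lam i) * t)) := by
            rw [show (a i * Real.exp (lam i * t)) * (b i * Real.exp (-(lam i) * t))
              = a i * b i * (Real.exp (lam i * t) * Real.exp (-(lam i) * t)) by ring,
              hE, mul_one]
    have := key_ineq hx hy hxy (hL i)
    ring_nf at this ⊢
    linarith [this]
  rw [hval]
  refine le_trans hsumineq (le_of_eq ?_)
  have hft : f t = (∑ i, (a i * Real.exp (lam i * t) + b i * Real.exp (-(lam i) * t)))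
      + (-(2 * n)) := by rw [hf']
  rw [hft, htr, Finset.sum_add_distrib, Finset.sum_sub_distrib, Finset.sum_const,
    Finset.card_univ, Fintype.card_fin, nsmul_eq_mul, ← Finset.mul_sum, ← Finset.mul_sum]
  generalize (∑ i, (a i * Real.exp (lam i * t) + b i * Real.exp (-(lam i) * t))) = S
  generalize (∑ i, lam i ^ (2 * m)) = T
  ring
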